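/- Let C ∈ ℝ^{n₁×n₂×n₃} and D ∈ ℝ^{n₁×l×n₃}, and fix an initial tensor X₁ ∈ ℝ^{n₂×l×n₃}. The tensor equation C⋆X = D is inconsistent (has no solution) if and only if there exists an index k at which the iterates of Algorithm 2 are defined with R_k ≠ 0 but Q_k = 0. -/

import Mathlib

open Matrix Filter Topology

noncomputable section

/-- A third-order real tensor of size `n₁ × n₂ × n₃`, identified with the family of its
frontal slices indexed by `ZMod n₃`. -/
abbrev Tensor (n₁ n₂ n₃ : ℕ) := ZMod n₃ → Matrix (Fin n₁) (Fin n₂) ℝ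

/-- The T-product of third-order tensors: `(C ⋆ D)(k) = ∑ j, C (k - j) * D j`. -/
def tProd {n₁ n₂ l n₃ : ℕ} [NeZero n₃] (C : Tensor n₁ n₂ n₃) (D : Tensor n₂ l n₃) :
    Tensor n₁ l n₃ :=
  fun k => ∑ j : ZMod n₃, C (k - j) * D j

/-- The tensor transpose: `(Cᵀ)(k) = (C (-k))ᵀ`. -/
def tTrans {n₁ n₂ n₃ : ℕ} (C : Tensor n₁ n₂ n₃) : Tensor n₂ n₁ n₃ :=
  fun k => (C (-k))ᵀ

/-- The matrix trace of the first frontal slice of a tensor with square slices. -/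
def trFirst {m n₃ : ℕ} (S : Tensor m m n₃) : ℝ :=
  (S 0).trace

/-- The inner product `⟨C, D⟩ = ∑ k i j, C k i j * D k i j`. -/
def tInner {n₁ n₂ n₃ : ℕ} [NeZero n₃] (C D : Tensor n₁ n₂ n₃) : ℝ :=
  ∑ k : ZMod n₃, ∑ i : Fin n₁, ∑ j : Fin n₂, C k i j * D k i j

/-- The Frobenius norm `‖C‖ = √⟨C, C⟩`. -/
def tNorm {n₁ n₂ n₃ : ℕ} [NeZero n₃] (C : Tensor n₁ n₂ n₃) : ℝ :=
  Real.sqrt (tInner C C)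

/-- The block circulant matrix of a tensor: its `(k, l)` block is `C (k - l)`. -/
def bCirc {n n₃ : ℕ} [NeZero n₃] (C : Tensor n n n₃) :
    Matrix (ZMod n₃ × Fin n) (ZMod n₃ × Fin n) ℝ :=
  fun p q => C (p.1 - q.1) p.2 q.2

/-- `C` is T-symmetric positive definite: `Cᵀ = C` and `bCirc C` is positive definite. -/
def TSymPD {n n₃ : ℕ} [NeZero n₃] (C : Tensor n n n₃) : Prop :=
  tTrans C = C ∧ (bCirc C).PosDef

section helper
variable {a b c n₃ : ℕ} [NeZero n₃]

lemma tInner_eq_trace (A B : Tensor a b n₃) :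
    tInner A B = ∑ k : ZMod n₃, ((A k)ᵀ * B k).trace := by
  refine Finset.sum_congr rfl fun k _ => ?_
  rw [Matrix.trace]
  simp only [Matrix.diag, Matrix.mul_apply, Matrix.transpose_apply]
  rw [Finset.sum_comm]

lemma tInner_comm (A B : Tensor a b n₃) : tInner A B = tInner B A := by
  simp [tInner, mul_comm]

lemma tInner_add_left (A B : Tensor a b n₃) (Z : Tensor a b n₃) :
    tInner (A + B) Z = tInner A Z + tInner B Z := by
  simp [tInner, add_mul, Finset.sum_add_distrib]

lemma tInner_smul_left (r : ℝ) (A Z : Tensor a b n₃) :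
    tInner (r • A) Z = r * tInner A Z := by
  simp [tInner, Finset.mul_sum, mul_assoc]

lemma tInner_zero_left (Z : Tensor a b n₃) : tInner 0 Z = 0 := by
  simp [tInner]

lemma tInner_neg_left (A Z : Tensor a b n₃) : tInner (-A) Z = -tInner A Z := by
  simp [tInner, Finset.sum_neg_distrib]

lemma tInner_sub_left (A B Z : Tensor a b n₃) :
    tInner (A - B) Z = tInner A Z - tInner B Z := by
  rw [sub_eq_add_neg, tInner_add_left, tInner_neg_left, sub_eq_add_neg]

lemma tInner_add_right (Z A B : Tensor a b n₃) :
    tInner Z (A + B) = tInner Z A + tInner Z B := by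
  rw [tInner_comm, tInner_add_left, tInner_comm A Z, tInner_comm B Z]

lemma tInner_smul_right (r : ℝ) (Z A : Tensor a b n₃) :
    tInner Z (r • A) = r * tInner Z A := by
  rw [tInner_comm, tInner_smul_left, tInner_comm A Z]

lemma tInner_sub_right (Z A B : Tensor a b n₃) :
    tInner Z (A - B) = tInner Z A - tInner Z B := by
  rw [tInner_comm, tInner_sub_left, tInner_comm A Z, tInner_comm B Z]

lemma tInner_self_nonneg (A : Tensor a b n₃) : 0 ≤ tInner A A := by
  refine Finset.sum_nonneg fun k _ => Finset.sum_nonneg fun i _ => Finset.sum_nonneg fun j _ => mul_self_nonneg _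

lemma tInner_self_eq_zero {A : Tensor a b n₃} : tInner A A = 0 ↔ A = 0 := by
  constructor
  · intro h
    funext k
    ext i j
    have h1 := (Finset.sum_eq_zero_iff_of_nonneg (fun k _ =>
      Finset.sum_nonneg fun i _ => Finset.sum_nonneg fun j _ => mul_self_nonneg (A k i j))).1 h
      k (Finset.mem_univ k)
    have h2 := (Finset.sum_eq_zero_iff_of_nonneg (fun i _ =>
      Finset.sum_nonneg fun j _ => mul_self_nonneg (A k i j))).1 h1 i (Finset.mem_univ i)
    have h3 := (Finset.sum_eq_zero_iff_of_nonneg (fun j _ =>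
      mul_self_nonneg (A k i j))).1 h2 j (Finset.mem_univ j)
    simpa [mul_self_eq_zero] using h3
  · intro h; subst h; simp [tInner]

lemma tInner_self_ne_zero {A : Tensor a b n₃} (h : A ≠ 0) : tInner A A ≠ 0 :=
  fun h0 => h (tInner_self_eq_zero.mp h0)

lemma tInner_sum_left {ι : Type*} (s : Finset ι) (f : ι → Tensor a b n₃) (Z : Tensor a b n₃) :
    tInner (∑ i ∈ s, f i) Z = ∑ i ∈ s, tInner (f i) Z := by
  classical
  induction s using Finset.induction with
  | empty => simp [tInner_zero_left]
  | insert i s hne ih => rw [Finset.sum_insert hne, Finset.sum_insert hne, tInner_add_left, ih]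

lemma tProd_add (C : Tensor a b n₃) (X Y : Tensor b c n₃) :
    tProd C (X + Y) = tProd C X + tProd C Y := by
  funext k
  simp [tProd, Matrix.mul_add, Finset.sum_add_distrib]

lemma tProd_smul (C : Tensor a b n₃) (r : ℝ) (X : Tensor b c n₃) :
    tProd C (r • X) = r • tProd C X := by
  funext k
  simp [tProd, Matrix.mul_smul, Finset.smul_sum]

lemma tProd_sub (C : Tensor a b n₃) (X Y : Tensor b c n₃) :
    tProd C (X - Y) = tProd C X - tProd C Y := by
  funext k
  simp [tProd, Matrix.mul_sub, Finset.sum_sub_distrib]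

lemma tInner_tProd_left (C : Tensor a b n₃) (Y : Tensor b c n₃) (Z : Tensor a c n₃) :
    tInner (tProd C Y) Z = tInner Y (tProd (tTrans C) Z) := by
  rw [tInner_eq_trace, tInner_eq_trace]
  have h1 : ∀ k, ((tProd C Y k)ᵀ * Z k).trace
      = ∑ m : ZMod n₃, ((Y m)ᵀ * ((C (k - m))ᵀ * Z k)).trace := by
    intro k
    simp [tProd, Matrix.transpose_sum, Matrix.sum_mul, Matrix.trace_sum,
      Matrix.transpose_mul, Matrix.mul_assoc]
  have h2 : ∀ m, ((Y m)ᵀ * tProd (tTrans C) Z m).trace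
      = ∑ k : ZMod n₃, ((Y m)ᵀ * ((C (k - m))ᵀ * Z k)).trace := by
    intro m
    have : ∀ k : ZMod n₃, tTrans C (m - k) = (C (k - m))ᵀ := by
      intro k; simp [tTrans, neg_sub]
    simp [tProd, this, Matrix.mul_sum, Matrix.trace_sum]
  simp only [h1, h2]
  rw [Finset.sum_comm]

lemma trFirst_eq_tInner (A B : Tensor a b n₃) :
    trFirst (tProd (tTrans A) B) = tInner A B := by
  rw [tInner_eq_trace, trFirst]
  have : ∀ j : ZMod n₃, tTrans A (-j) = (A j)ᵀ := by
    intro j; simp [tTrans]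
  simp [tProd, this, Matrix.trace_sum]

end helper

theorem stmt_11 (n₁ n₂ l n₃ : ℕ) [NeZero n₃] (C : Tensor n₁ n₂ n₃)
    (D : Tensor n₁ l n₃)
    (X : ℕ → Tensor n₂ l n₃) (R : ℕ → Tensor n₁ l n₃)
    (P Q : ℕ → Tensor n₂ l n₃)
    (hR : ∀ i, 1 ≤ i → R i = D - tProd C (X i))
    (hP : ∀ i, 1 ≤ i → P i = tProd (tTrans C) (R i))
    (hQ1 : Q 1 = P 1)
    (hX : ∀ i, 1 ≤ i → X (i + 1) = X i +
      (tInner (R i) (R i) / tInner (Q i) (Q i)) • Q i)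
    (hQ : ∀ i, 1 ≤ i → Q (i + 1) = P (i + 1) -
      (trFirst (tProd (tTrans (P (i + 1))) (Q i)) / tInner (Q i) (Q i)) • Q i)
    :
    (¬ ∃ Xs : Tensor n₂ l n₃, tProd C Xs = D) ↔
      ∃ k, 1 ≤ k ∧ (∀ j, 1 ≤ j → j < k → Q j ≠ 0) ∧ R k ≠ 0 ∧ Q k = 0 := by
  classical
  -- residual recurrence
  have hRrec : ∀ i, 1 ≤ i → R (i+1)
      = R i - (tInner (R i) (R i) / tInner (Q i) (Q i)) • tProd C (Q i) := by
    intro i hi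
    rw [hR (i+1) (by omega), hX i hi, tProd_add, tProd_smul, hR i hi, sub_add_eq_sub_sub]
  -- consistency invariant
  have key : ∀ Xs : Tensor n₂ l n₃, tProd C Xs = D → ∀ i, 1 ≤ i →
      (∀ j, 1 ≤ j → j < i → Q j ≠ 0) →
      tInner (Q i) (Xs - X i) = tInner (R i) (R i) := by
    intro Xs hXs i hi
    induction i, hi using Nat.le_induction with
    | base =>
      intro _
      have h1 : tProd C (Xs - X 1) = R 1 := by rw [tProd_sub, hXs, ← hR 1 le_rfl]
      rw [hQ1, hP 1 le_rfl, tInner_comm, ← tInner_tProd_left, h1]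
    | succ i hi IH =>
      intro hjQ
      have hQi : Q i ≠ 0 := hjQ i hi (by omega)
      have hQQ : tInner (Q i) (Q i) ≠ 0 := tInner_self_ne_zero hQi
      have hIH := IH (fun j hj hji => hjQ j hj (by omega))
      have h1 : tInner (P (i+1)) (Xs - X (i+1)) = tInner (R (i+1)) (R (i+1)) := by
        have hprod : tProd C (Xs - X (i+1)) = R (i+1) := by
          rw [tProd_sub, hXs, ← hR (i+1) (by omega)]
        rw [hP (i+1) (by omega), tInner_comm, ← tInner_tProd_left, hprod]
      have h2 : tInner (Q i) (Xs - X (i+1)) = 0 := by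
        rw [hX i hi, sub_add_eq_sub_sub, tInner_sub_right, tInner_smul_right, hIH,
          div_mul_cancel₀ _ hQQ, sub_self]
      rw [hQ i hi, tInner_sub_left, tInner_smul_left, h1, h2, mul_zero, sub_zero]
  constructor
  · -- inconsistent → breakdown
    intro hinc
    have hRnz : ∀ j, 1 ≤ j → R j ≠ 0 := by
      intro j hj h0
      refine hinc ⟨X j, ?_⟩
      have h1 := hR j hj
      rw [h0] at h1
      exact (sub_eq_zero.mp h1.symm).symm
    have hex : ∃ k, 1 ≤ k ∧ Q k = 0 := by
      by_contra hno
      push_neg at hno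
      -- orthogonality of the Q's
      have orth : ∀ i, 1 ≤ i → ∀ j, 1 ≤ j → j < i →
          tInner (R i) (R j) = 0 ∧ tInner (Q i) (Q j) = 0 := by
        intro i hi
        induction i, hi using Nat.le_induction with
        | base => intro j hj hji; omega
        | succ i hi IH =>
          have hQi : Q i ≠ 0 := hno i hi
          have hQQi : tInner (Q i) (Q i) ≠ 0 := tInner_self_ne_zero hQi
          -- ⟨Q i, P j⟩ = 0 for 1 ≤ j < i
          have hPQ : ∀ j, 1 ≤ j → j < i → tInner (Q i) (P j) = 0 := by
            intro j hj hji
            rcases Nat.exists_eq_add_of_le hj with ⟨m, rfl⟩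
            rcases Nat.eq_zero_or_pos m with rfl | hm
            · rw [← hQ1]
              exact (IH 1 le_rfl (by omega)).2
            · have hm1 : 1 ≤ m := hm
              have hPm : P (1 + m) = Q (1 + m) +
                  (trFirst (tProd (tTrans (P (m + 1))) (Q m)) / tInner (Q m) (Q m)) • Q m := by
                have := hQ m hm1
                rw [show 1 + m = m + 1 by omega, this, sub_add_cancel]
              rw [hPm, tInner_add_right, tInner_smul_right,
                (IH (1+m) (by omega) (by omega)).2,
                (IH m hm1 (by omega)).2, mul_zero, add_zero]
          -- ⟨Q i, P i⟩ = ⟨Q i, Q i⟩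
          have hQPi : tInner (Q i) (P i) = tInner (Q i) (Q i) := by
            rcases Nat.exists_eq_add_of_le hi with ⟨m, rfl⟩
            rcases Nat.eq_zero_or_pos m with rfl | hm
            · rw [← hQ1]
            · have hm1 : 1 ≤ m := hm
              have hPm : P (1 + m) = Q (1 + m) +
                  (trFirst (tProd (tTrans (P (m + 1))) (Q m)) / tInner (Q m) (Q m)) • Q m := by
                have := hQ m hm1
                rw [show 1 + m = m + 1 by omega, this, sub_add_cancel]
              rw [hPm, tInner_add_right, tInner_smul_right,
                (IH m hm1 (by omega)).2, mul_zero, add_zero]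
          -- R-orthogonality at level i+1
          have ha : ∀ j, 1 ≤ j → j ≤ i → tInner (R (i+1)) (R j) = 0 := by
            intro j hj hje
            rw [hRrec i hi, tInner_sub_left, tInner_smul_left]
            have hadj : tInner (tProd C (Q i)) (R j) = tInner (Q i) (P j) := by
              rw [tInner_tProd_left, ← hP j hj]
            rcases eq_or_lt_of_le hje with rfl | hlt
            · rw [hadj, hQPi, div_mul_cancel₀ _ hQQi, sub_self]
            · rw [hadj, hPQ j hj hlt, (IH j hj hlt).1, mul_zero, sub_self]
          -- Q-orthogonality at level i+1
          have hb : ∀ j, 1 ≤ j → j ≤ i → tInner (Q (i+1)) (Q j) = 0 := by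
            intro j hj hje
            rw [hQ i hi, tInner_sub_left, tInner_smul_left, trFirst_eq_tInner]
            rcases eq_or_lt_of_le hje with rfl | hlt
            · rw [div_mul_cancel₀ _ hQQi, sub_self]
            · rw [(IH j hj hlt).2, mul_zero, sub_zero]
              have hQj : Q j ≠ 0 := hno j hj
              have hRj : R j ≠ 0 := hRnz j hj
              have hαj : tInner (R j) (R j) / tInner (Q j) (Q j) ≠ 0 :=
                div_ne_zero (tInner_self_ne_zero hRj) (tInner_self_ne_zero hQj)
              have hsm : (tInner (R j) (R j) / tInner (Q j) (Q j)) • tProd C (Q j)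
                  = R j - R (j+1) := by
                rw [hRrec j hj, sub_sub_cancel]
              have hz : (tInner (R j) (R j) / tInner (Q j) (Q j)) *
                  tInner (tProd C (Q j)) (R (i+1)) = 0 := by
                rw [← tInner_smul_left, hsm, tInner_sub_left,
                  tInner_comm (R j), tInner_comm (R (j+1)),
                  ha j hj (le_of_lt hlt), ha (j+1) (by omega) hlt, sub_self]
              have hz2 : tInner (tProd C (Q j)) (R (i+1)) = 0 :=
                (mul_eq_zero.mp hz).resolve_left hαj
              rw [hP (i+1) (by omega), tInner_comm, ← tInner_tProd_left, hz2]
          intro j hj hji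
          exact ⟨ha j hj (by omega), hb j hj (by omega)⟩
      -- the Q's form an infinite orthogonal family of nonzero vectors : contradiction
      have hli : LinearIndependent ℝ (fun n : ℕ => Q (n+1)) := by
        rw [linearIndependent_iff']
        intro s g hsum t ht
        have h2 : tInner (∑ i ∈ s, g i • Q (i+1)) (Q (t+1)) = 0 := by
          rw [hsum]; exact tInner_zero_left _
        rw [tInner_sum_left] at h2
        simp only [tInner_smul_left] at h2
        have h3 : ∀ i ∈ s, i ≠ t → g i * tInner (Q (i+1)) (Q (t+1)) = 0 := by
          intro i _ hit
          rcases Nat.lt_or_ge i t with h | h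
          · rw [tInner_comm, (orth (t+1) (by omega) (i+1) (by omega) (by omega)).2, mul_zero]
          · have : t < i := by omega
            rw [(orth (i+1) (by omega) (t+1) (by omega) (by omega)).2, mul_zero]
        rw [Finset.sum_eq_single_of_mem t ht h3] at h2
        exact (mul_eq_zero.mp h2).resolve_right
          (tInner_self_ne_zero (hno (t+1) (by omega)))
      exact Module.Finite.not_linearIndependent_of_infinite _ hli
    refine ⟨Nat.find hex, (Nat.find_spec hex).1, ?_, hRnz _ (Nat.find_spec hex).1,
      (Nat.find_spec hex).2⟩
    intro j hj hjlt h0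
    exact Nat.find_min hex hjlt ⟨hj, h0⟩
  · -- breakdown → inconsistent
    rintro ⟨k, hk1, hprev, hRk, hQk⟩ ⟨Xs, hXs⟩
    have h := key Xs hXs k hk1 hprev
    rw [hQk, tInner_zero_left] at h
    exact hRk (tInner_self_eq_zero.mp h.symm)
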